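/- Suppose W(t) = Σ_{k=1}^D σ_k(t) q_k r_kᵀ and Σ = Σ_{k=1}^D s_k q_k r_kᵀ with {q_k}, {r_k} orthonormal and σ_k(t) ≥ 0. If W satisfies the matrix ODE W' = −(W − Σ)(WᵀW)^{1/2} − (WWᵀ)^{1/2}(W − Σ), then each coefficient satisfies the decoupled scalar ODE σ_k'(t) = 2σ_k(t)(s_k − σ_k(t)). -/

import Mathlib

open Matrix

namespace Matrix.PosSemidef

open scoped ComplexOrder

/-- The positive semidefinite square root of a positive semidefinite matrix
(the definition Mathlib had in December 2024, since removed). -/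
noncomputable def sqrt {n 𝕜 : Type*} [Fintype n] [RCLike 𝕜] [DecidableEq n]
    {A : Matrix n n 𝕜} (hA : A.PosSemidef) : Matrix n n 𝕜 :=
  hA.1.eigenvectorUnitary.1 * diagonal ((↑) ∘ (Real.sqrt ∘ hA.1.eigenvalues)) *
  (star hA.1.eigenvectorUnitary : Matrix n n 𝕜)

end Matrix.PosSemidef

open scoped MatrixOrder in
private lemma my_eq_sqrt_of_sq_eq {n : Type*} [Fintype n] [DecidableEq n]
    {A B : Matrix n n ℝ} (hB : B.PosSemidef) (hA : A.PosSemidef) (h : B ^ 2 = A) :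
    B = hA.sqrt := by
  have e1 : hA.sqrt = cfc Real.sqrt A := by
    rw [hA.1.cfc_eq, IsHermitian.cfc, Unitary.conjStarAlgAut_apply]
    rfl
  rw [e1, ← cfcₙ_eq_cfc, ← CFC.sqrt_eq_real_sqrt A hA.nonneg, eq_comm,
    CFC.sqrt_eq_iff A B hA.nonneg hB.nonneg, ← h, pow_two]

private lemma my_vmv_mul {m n p : Type*} [Fintype n] (a : m → ℝ) (b c : n → ℝ) (d : p → ℝ) :
    vecMulVec a b * vecMulVec c d = (b ⬝ᵥ c) • vecMulVec a d := by
  ext i j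
  simp [mul_apply, vecMulVec_apply, dotProduct, Finset.sum_mul, Finset.mul_sum]
  apply Finset.sum_congr rfl
  intros; ring

private lemma my_vmv_mulVec {m n : Type*} [Fintype n] (a : m → ℝ) (b v : n → ℝ) :
    vecMulVec a b *ᵥ v = (b ⬝ᵥ v) • a := by
  ext i
  simp [mulVec, vecMulVec_apply, dotProduct, Finset.mul_sum, Finset.sum_mul]
  apply Finset.sum_congr rfl
  intros; ring

private lemma my_dot_vmv {m n : Type*} [Fintype m] [Fintype n] (u : m → ℝ) (a : m → ℝ)
    (b v : n → ℝ) :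
    u ⬝ᵥ (vecMulVec a b *ᵥ v) = (u ⬝ᵥ a) * (b ⬝ᵥ v) := by
  rw [my_vmv_mulVec, dotProduct_smul, smul_eq_mul]
  ring

private lemma my_sum_mulVec {m n ι : Type*} [Fintype n] (s : Finset ι)
    (M : ι → Matrix m n ℝ) (v : n → ℝ) :
    (∑ l ∈ s, M l) *ᵥ v = ∑ l ∈ s, M l *ᵥ v := by
  ext i
  simp only [Finset.sum_apply, mulVec, dotProduct, Matrix.sum_apply, Finset.sum_mul]
  exact Finset.sum_comm

private lemma my_dotProduct_sum {n ι : Type*} [Fintype n] (s : Finset ι)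
    (u : n → ℝ) (v : ι → n → ℝ) :
    u ⬝ᵥ (∑ l ∈ s, v l) = ∑ l ∈ s, u ⬝ᵥ v l := by
  simp only [dotProduct, Finset.sum_apply, Finset.mul_sum]
  exact Finset.sum_comm

/-- Product of two orthonormal-expanded sums collapses to a single sum. -/
private lemma my_sum_mul_sum {m n p : Type*} [Fintype n] {D : ℕ}
    (c d : Fin D → ℝ) (a : Fin D → m → ℝ) (b e : Fin D → n → ℝ) (f : Fin D → p → ℝ)
    (hbe : ∀ k l, b k ⬝ᵥ e l = if k = l then (1 : ℝ) else 0) :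
    (∑ l : Fin D, c l • vecMulVec (a l) (b l)) * (∑ l : Fin D, d l • vecMulVec (e l) (f l))
      = ∑ l : Fin D, (c l * d l) • vecMulVec (a l) (f l) := by
  rw [Matrix.sum_mul]
  apply Finset.sum_congr rfl
  intro l _
  rw [Matrix.mul_sum, Finset.sum_eq_single l]
  · rw [Matrix.smul_mul, Matrix.mul_smul, my_vmv_mul, hbe, if_pos rfl, one_smul, smul_smul]
  · intro m _ hm
    rw [Matrix.smul_mul, Matrix.mul_smul, my_vmv_mul, hbe,
      if_neg (fun h => hm h.symm), zero_smul, smul_zero, smul_zero]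
  · intro h; exact absurd (Finset.mem_univ l) h

/-- Sandwiching an orthonormal-expanded sum between `q k` and `r k` picks out coefficient `k`. -/
private lemma my_dot_sum {m n : Type*} [Fintype m] [Fintype n] {D : ℕ}
    (c : Fin D → ℝ) (q : Fin D → m → ℝ) (r : Fin D → n → ℝ)
    (hq : ∀ k l, q k ⬝ᵥ q l = if k = l then (1 : ℝ) else 0)
    (hr : ∀ k l, r k ⬝ᵥ r l = if k = l then (1 : ℝ) else 0) (k : Fin D) :
    q k ⬝ᵥ ((∑ l : Fin D, c l • vecMulVec (q l) (r l)) *ᵥ r k) = c k := by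
  rw [my_sum_mulVec, my_dotProduct_sum]
  rw [Finset.sum_eq_single k]
  · rw [smul_mulVec, dotProduct_smul, my_dot_vmv, hq, hr]
    simp
  · intro m _ hm
    rw [smul_mulVec, dotProduct_smul, my_dot_vmv, hq, if_neg (fun h => hm h.symm)]
    simp
  · intro h; exact absurd (Finset.mem_univ k) h

/-- If `W(t) = Σ_k σ_k(t) q_k r_kᵀ` and `Σ = Σ_k s_k q_k r_kᵀ` with orthonormal
families `{q_k}, {r_k}`, `σ_k(t) ≥ 0`, and `W` satisfies the matrix ODE
`W' = −(W − Σ)(WᵀW)^{1/2} − (WWᵀ)^{1/2}(W − Σ)`, then each coefficient satisfies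
the decoupled logistic ODE `σ_k' = 2σ_k(s_k − σ_k)`. -/
theorem matrix_ode_decouples_to_logistic (di dout D : ℕ)
    (s : Fin D → ℝ) (hs : ∀ k, 0 < s k)
    (q : Fin D → Fin dout → ℝ) (r : Fin D → Fin di → ℝ)
    (hq : ∀ k l, q k ⬝ᵥ q l = if k = l then (1 : ℝ) else 0)
    (hr : ∀ k l, r k ⬝ᵥ r l = if k = l then (1 : ℝ) else 0)
    (σ σ' : Fin D → ℝ → ℝ)
    (hderiv : ∀ k t, HasDerivAt (σ k) (σ' k t) t)
    (hnn : ∀ k t, 0 ≤ σ k t)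
    (W : ℝ → Matrix (Fin dout) (Fin di) ℝ)
    (hW : ∀ t, W t = ∑ k : Fin D, σ k t • vecMulVec (q k) (r k))
    (Sig : Matrix (Fin dout) (Fin di) ℝ)
    (hSig : Sig = ∑ k : Fin D, s k • vecMulVec (q k) (r k))
    (hps1 : ∀ t, ((W t)ᵀ * W t).PosSemidef)
    (hps2 : ∀ t, (W t * (W t)ᵀ).PosSemidef)
    (hODE : ∀ t (i : Fin dout) (j : Fin di),
      HasDerivAt (fun t => W t i j)
        ((-(W t - Sig) * (hps1 t).sqrt - (hps2 t).sqrt * (W t - Sig)) i j) t) :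
    ∀ k t, σ' k t = 2 * σ k t * (s k - σ k t) := by
  intro k t
  -- candidate square roots
  set A : Matrix (Fin di) (Fin di) ℝ :=
    ∑ l : Fin D, σ l t • vecMulVec (r l) (r l) with hAdef
  set B : Matrix (Fin dout) (Fin dout) ℝ :=
    ∑ l : Fin D, σ l t • vecMulVec (q l) (q l) with hBdef
  have hWt : (W t)ᵀ = ∑ l : Fin D, σ l t • vecMulVec (r l) (q l) := by
    rw [hW]
    rw [transpose_sum]
    apply Finset.sum_congr rfl
    intro l _
    ext i j
    simp [vecMulVec_apply, mul_comm]
  have hApsd : A.PosSemidef := by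
    refine PosSemidef.of_dotProduct_mulVec_nonneg ?_ ?_
    · show Aᴴ = A
      ext i j
      rw [hAdef]
      simp only [conjTranspose_apply, star_trivial, Matrix.sum_apply, Matrix.smul_apply,
        vecMulVec_apply, smul_eq_mul]
      apply Finset.sum_congr rfl
      intros; ring
    · intro x
      rw [star_trivial, hAdef, my_sum_mulVec, my_dotProduct_sum]
      apply Finset.sum_nonneg
      intro l _
      rw [smul_mulVec, dotProduct_smul, my_dot_vmv, smul_eq_mul]
      have := mul_self_nonneg (r l ⬝ᵥ x)
      rw [dotProduct_comm x (r l)]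
      nlinarith [hnn l t]
  have hBpsd : B.PosSemidef := by
    refine PosSemidef.of_dotProduct_mulVec_nonneg ?_ ?_
    · show Bᴴ = B
      ext i j
      rw [hBdef]
      simp only [conjTranspose_apply, star_trivial, Matrix.sum_apply, Matrix.smul_apply,
        vecMulVec_apply, smul_eq_mul]
      apply Finset.sum_congr rfl
      intros; ring
    · intro x
      rw [star_trivial, hBdef, my_sum_mulVec, my_dotProduct_sum]
      apply Finset.sum_nonneg
      intro l _
      rw [smul_mulVec, dotProduct_smul, my_dot_vmv, smul_eq_mul]
      have := mul_self_nonneg (q l ⬝ᵥ x)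
      rw [dotProduct_comm x (q l)]
      nlinarith [hnn l t]
  have hA2 : A ^ 2 = (W t)ᵀ * W t := by
    rw [pow_two, hAdef, hWt, hW, my_sum_mul_sum _ _ _ _ _ _ hr, my_sum_mul_sum _ _ _ _ _ _ hq]
  have hB2 : B ^ 2 = W t * (W t)ᵀ := by
    rw [pow_two, hBdef, hWt, hW, my_sum_mul_sum _ _ _ _ _ _ hq, my_sum_mul_sum _ _ _ _ _ _ hr]
  have hAsqrt : (hps1 t).sqrt = A := (my_eq_sqrt_of_sq_eq hApsd (hps1 t) hA2).symm
  have hBsqrt : (hps2 t).sqrt = B := (my_eq_sqrt_of_sq_eq hBpsd (hps2 t) hB2).symm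
  -- difference matrix
  have hdiff : W t - Sig = ∑ l : Fin D, (σ l t - s l) • vecMulVec (q l) (r l) := by
    rw [hW, hSig, ← Finset.sum_sub_distrib]
    apply Finset.sum_congr rfl
    intro l _
    rw [sub_smul]
  -- the RHS of the ODE, sandwiched
  set M : Matrix (Fin dout) (Fin di) ℝ :=
    -(W t - Sig) * (hps1 t).sqrt - (hps2 t).sqrt * (W t - Sig) with hMdef
  have h1 : -(W t - Sig) = ∑ l : Fin D, (s l - σ l t) • vecMulVec (q l) (r l) := by
    rw [hdiff, ← Finset.sum_neg_distrib]
    exact Finset.sum_congr rfl fun l _ => by rw [← neg_smul, neg_sub]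
  have hM : M = ∑ l : Fin D, (2 * σ l t * (s l - σ l t)) • vecMulVec (q l) (r l) := by
    rw [hMdef, hAsqrt, hBsqrt, h1, hdiff, hAdef, hBdef,
      my_sum_mul_sum _ _ _ _ _ _ hr, my_sum_mul_sum _ _ _ _ _ _ hq,
      ← Finset.sum_sub_distrib]
    exact Finset.sum_congr rfl fun l _ => by rw [← sub_smul]; congr 1; ring
  have hsand : q k ⬝ᵥ (M *ᵥ r k) = 2 * σ k t * (s k - σ k t) := by
    rw [hM, my_dot_sum _ _ _ hq hr]
  -- derivative of the sandwiched function
  have hfun : (fun u => q k ⬝ᵥ (W u *ᵥ r k)) = σ k := by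
    funext u
    rw [hW u, my_dot_sum _ _ _ hq hr]
  have hd : HasDerivAt (fun u => q k ⬝ᵥ (W u *ᵥ r k)) (q k ⬝ᵥ (M *ᵥ r k)) t := by
    simp only [dotProduct, mulVec, Finset.mul_sum]
    apply HasDerivAt.fun_sum
    intro i _
    apply HasDerivAt.fun_sum
    intro j _
    exact ((hODE t i j).mul_const (r k j)).const_mul (q k i)
  rw [hfun, hsand] at hd
  exact (hderiv k t).unique hd
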